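/- Let H be an n×n real symmetric matrix with a one-dimensional nullspace spanned by x. Then for any vectors y, z ∈ ℝⁿ, det(H + y zᵀ) = (⟨x,y⟩⟨x,z⟩ / ⟨x,x⟩) · det_red(H), where det_red(H) is the product of the nonzero eigenvalues of H. -/

import Mathlib

open Matrix BigOperators

private lemma det_updateRow_diagonal {n : ℕ} (d v : Fin n → ℝ) (i₀ : Fin n) :
    ((Matrix.diagonal d).updateRow i₀ v).det
      = (∏ j ∈ Finset.univ.erase i₀, d j) * v i₀ := by
  rw [← Matrix.cramer_transpose_apply, Matrix.diagonal_transpose,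
    Matrix.cramer_eq_adjugate_mulVec, Matrix.adjugate_diagonal, Matrix.mulVec_diagonal]

private lemma det_updateCol_one {n : ℕ} (u : Fin n → ℝ) (i₀ : Fin n) :
    ((1 : Matrix (Fin n) (Fin n) ℝ).updateCol i₀ u).det = u i₀ := by
  rw [← Matrix.cramer_apply, Matrix.cramer_one]
  rfl

private lemma diag_add_vecMulVec {n : ℕ} (d u v : Fin n → ℝ) (i₀ : Fin n) (h0 : d i₀ = 0) :
    Matrix.diagonal d + Matrix.vecMulVec u v
      = ((1 : Matrix (Fin n) (Fin n) ℝ).updateCol i₀ u) *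
          ((Matrix.diagonal d).updateRow i₀ v) := by
  ext i j
  have hterm : ∀ k ∈ Finset.univ.erase i₀,
      ((1 : Matrix (Fin n) (Fin n) ℝ).updateCol i₀ u) i k *
        ((Matrix.diagonal d).updateRow i₀ v) k j
      = if i = k then Matrix.diagonal d k j else 0 := by
    intro k hk
    have hk' : k ≠ i₀ := (Finset.mem_erase.mp hk).1
    rw [Matrix.updateCol_apply, if_neg hk', Matrix.updateRow_apply, if_neg hk',
      Matrix.one_apply]
    split_ifs <;> ring
  rw [Matrix.mul_apply, ← Finset.add_sum_erase _ _ (Finset.mem_univ i₀),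
    Finset.sum_congr rfl hterm, Finset.sum_ite_eq]
  rw [Matrix.updateCol_apply, if_pos rfl, Matrix.updateRow_apply, if_pos rfl]
  simp only [Finset.mem_erase, Finset.mem_univ, and_true, Matrix.add_apply,
    Matrix.vecMulVec_apply]
  by_cases hi : i = i₀
  · subst hi
    simp [Matrix.diagonal_apply, h0]
  · simp [hi, add_comm]

private lemma det_diag_add {n : ℕ} (d u v : Fin n → ℝ) (i₀ : Fin n) (h0 : d i₀ = 0) :
    (Matrix.diagonal d + Matrix.vecMulVec u v).det
      = u i₀ * v i₀ * ∏ j ∈ Finset.univ.erase i₀, d j := by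
  rw [diag_add_vecMulVec d u v i₀ h0, Matrix.det_mul, det_updateCol_one,
    det_updateRow_diagonal]
  ring

/-- Rank-one update determinant: if `H` is symmetric with one-dimensional kernel spanned by
`x`, then `det(H + y zᵀ) = (⟨x,y⟩⟨x,z⟩/⟨x,x⟩) · det_red(H)`, where `det_red(H)` is the product
of the nonzero eigenvalues of `H`. -/
theorem det_rank_one_update
    (n : ℕ) (H : Matrix (Fin n) (Fin n) ℝ) (hH : H.IsHermitian)
    (x : Fin n → ℝ) (hx : x ≠ 0)
    (hker : LinearMap.ker H.mulVecLin = Submodule.span ℝ {x})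
    (y z : Fin n → ℝ) :
    (H + Matrix.vecMulVec y z).det
      = (x ⬝ᵥ y) * (x ⬝ᵥ z) / (x ⬝ᵥ x)
        * ∏ i ∈ Finset.univ.filter (fun i => hH.eigenvalues i ≠ 0), hH.eigenvalues i := by
  classical
  set d : Fin n → ℝ := hH.eigenvalues with hd
  set U : Matrix (Fin n) (Fin n) ℝ := (hH.eigenvectorUnitary : Matrix (Fin n) (Fin n) ℝ)
    with hUdef
  have hU1 : U * star U = 1 := Matrix.mem_unitaryGroup_iff.mp hH.eigenvectorUnitary.2
  have hU2 : star U * U = 1 := Matrix.mem_unitaryGroup_iff'.mp hH.eigenvectorUnitary.2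
  have hspec : H = U * Matrix.diagonal d * star U := by
    have := hH.spectral_theorem
    simpa [RCLike.ofReal_real_eq_id, Function.id_comp] using this
  -- the determinant of H vanishes
  have hxx : x ⬝ᵥ x ≠ 0 := fun h => hx (dotProduct_self_eq_zero.mp h)
  have hxker : H *ᵥ x = 0 := by
    have : x ∈ LinearMap.ker H.mulVecLin := by
      rw [hker]; exact Submodule.mem_span_singleton_self x
    simpa using this
  have hdet0 : H.det = 0 := by
    rw [← Matrix.exists_mulVec_eq_zero_iff]
    exact ⟨x, hx, hxker⟩
  have hprod : ∏ i, d i = 0 := by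
    have h := hH.det_eq_prod_eigenvalues
    rw [hdet0] at h
    simpa using h.symm
  obtain ⟨i₀, -, hi₀⟩ := Finset.prod_eq_zero_iff.mp hprod
  -- eigenvectors with zero eigenvalue lie in span {x}
  have horth := orthonormal_iff_ite.mp hH.eigenvectorBasis.orthonormal
  have hevec : ∀ j : Fin n, d j = 0 →
      ∃ t : ℝ, t ≠ 0 ∧ t * (t * (x ⬝ᵥ x)) = 1 ∧
        ⇑(hH.eigenvectorBasis j) = t • x := by
    intro j hj
    have hcj : H *ᵥ ⇑(hH.eigenvectorBasis j) = 0 := by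
      rw [hH.mulVec_eigenvectorBasis, ← hd, hj, zero_smul]
    have hmem : ⇑(hH.eigenvectorBasis j) ∈ Submodule.span ℝ {x} := by
      rw [← hker]
      simpa using hcj
    obtain ⟨t, hct⟩ := Submodule.mem_span_singleton.mp hmem
    have hcc : (⇑(hH.eigenvectorBasis j) : Fin n → ℝ) ⬝ᵥ ⇑(hH.eigenvectorBasis j) = 1 := by
      have h1 := horth j j
      rw [if_pos rfl, PiLp.inner_apply] at h1
      simpa [dotProduct, mul_comm, sq] using h1
    rw [← hct] at hcc
    have ht2 : t * (t * (x ⬝ᵥ x)) = 1 := by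
      simpa [smul_dotProduct, dotProduct_smul, smul_eq_mul] using hcc
    have ht0 : t ≠ 0 := by
      intro h; rw [h] at ht2; simp at ht2
    exact ⟨t, ht0, ht2, hct.symm⟩
  obtain ⟨t, ht0, ht2, htc⟩ := hevec i₀ hi₀
  -- all other eigenvalues are nonzero
  have hnz : ∀ j, j ≠ i₀ → d j ≠ 0 := by
    intro j hj hdj
    obtain ⟨s, hs0, hs2, hsc⟩ := hevec j hdj
    have h0 := horth i₀ j
    rw [if_neg hj.symm] at h0
    have : (⇑(hH.eigenvectorBasis i₀) : Fin n → ℝ) ⬝ᵥ ⇑(hH.eigenvectorBasis j) = 0 := by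
      simpa [PiLp.inner_apply, dotProduct, mul_comm] using h0
    rw [htc, hsc] at this
    simp only [smul_dotProduct, dotProduct_smul, smul_eq_mul] at this
    rcases mul_eq_zero.mp this with h | h
    · first | exact ht0 h | exact hs0 h
    · rcases mul_eq_zero.mp h with h' | h'
      · first | exact ht0 h' | exact hs0 h'
      · exact hxx h'
  have hfilter : Finset.univ.filter (fun i => d i ≠ 0) = Finset.univ.erase i₀ := by
    ext j
    simp only [Finset.mem_filter, Finset.mem_erase, Finset.mem_univ, true_and, and_true]
    constructor
    · intro h he; exact h (he ▸ hi₀)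
    · exact hnz j
  -- conjugate the rank one update by U
  set a : Fin n → ℝ := star U *ᵥ y with ha
  set b : Fin n → ℝ := star U *ᵥ z with hb
  have hsU : star U = Uᵀ := by
    rw [Matrix.star_eq_conjTranspose, Matrix.conjTranspose_eq_transpose_of_trivial]
  have key : H + Matrix.vecMulVec y z
      = U * (Matrix.diagonal d + Matrix.vecMulVec a b) * star U := by
    rw [Matrix.mul_add, Matrix.add_mul, ← hspec]
    congr 1
    have h1 : U *ᵥ a = y := by
      rw [ha, Matrix.mulVec_mulVec, hU1, Matrix.one_mulVec]
    have h2 : b ᵥ* star U = z := by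
      rw [hb, hsU, Matrix.vecMul_transpose, Matrix.mulVec_mulVec, ← hsU, hU1, Matrix.one_mulVec]
    rw [Matrix.vecMulVec_eq (Fin 1), Matrix.vecMulVec_eq (Fin 1)]
    calc Matrix.replicateCol (Fin 1) y * Matrix.replicateRow (Fin 1) z
        = Matrix.replicateCol (Fin 1) (U *ᵥ a) * Matrix.replicateRow (Fin 1) (b ᵥ* star U) := by rw [h1, h2]
      _ = (U * Matrix.replicateCol (Fin 1) a) * (Matrix.replicateRow (Fin 1) b * star U) := by
          rw [Matrix.replicateCol_mulVec, Matrix.replicateRow_vecMul]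
      _ = U * (Matrix.replicateCol (Fin 1) a * Matrix.replicateRow (Fin 1) b) * star U := by
          rw [← Matrix.mul_assoc, Matrix.mul_assoc U]
  -- compute the determinant
  have hdetU : U.det * (star U).det = 1 := by
    rw [← Matrix.det_mul, hU1, Matrix.det_one]
  have hdet : (H + Matrix.vecMulVec y z).det
      = a i₀ * b i₀ * ∏ j ∈ Finset.univ.erase i₀, d j := by
    rw [key, Matrix.det_mul, Matrix.det_mul, det_diag_add d a b i₀ hi₀]
    calc U.det * ((a i₀ * b i₀ * ∏ j ∈ Finset.univ.erase i₀, d j)) * (star U).det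
        = (U.det * (star U).det) * (a i₀ * b i₀ * ∏ j ∈ Finset.univ.erase i₀, d j) := by ring
      _ = a i₀ * b i₀ * ∏ j ∈ Finset.univ.erase i₀, d j := by rw [hdetU, one_mul]
  -- identify a i₀ and b i₀
  have hcol : ∀ w : Fin n → ℝ, (star U *ᵥ w) i₀ = t * (x ⬝ᵥ w) := by
    intro w
    have : (star U *ᵥ w) i₀ = (⇑(hH.eigenvectorBasis i₀) : Fin n → ℝ) ⬝ᵥ w := by
      simp only [hsU, Matrix.mulVec, Matrix.transpose_apply, dotProduct, hUdef,
        Matrix.IsHermitian.eigenvectorUnitary_apply, Matrix.star_apply, star_trivial]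
    rw [this, htc]
    simp [smul_dotProduct, dotProduct, Finset.mul_sum, mul_assoc]
  have hab : a i₀ * b i₀ = (x ⬝ᵥ y) * (x ⬝ᵥ z) / (x ⬝ᵥ x) := by
    rw [ha, hb, hcol y, hcol z]
    field_simp
    linear_combination ((x ⬝ᵥ y) * (x ⬝ᵥ z)) * ht2
  rw [hdet, hab, hfilter]
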